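/- Let T = wT_φ on C(K) with φ a homeomorphism of K into itself. If T is upper semi-Fredholm (closed range and finite-dimensional kernel), then the set K \ φ(K) is finite. -/

import Mathlib

open Filter Topology

/-- if `T = w T_φ` is upper semi-Fredholm on `C(K)`, then `K \ φ(K)` is
finite. -/
theorem stmt6 (K : Type*) [TopologicalSpace K] [CompactSpace K] [T2Space K]
    (φ : K → K) (hφc : Continuous φ) (hφi : Function.Injective φ)
    (w : C(K, ℂ)) (T : C(K, ℂ) →L[ℂ] C(K, ℂ))
    (hT : ∀ (f : C(K, ℂ)) (k : K), T f k = w k * f (φ k))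
    (hUSF : IsClosed (Set.range T) ∧ FiniteDimensional ℂ (LinearMap.ker (T : C(K, ℂ) →ₗ[ℂ] C(K, ℂ)))) :
    Set.Finite ((Set.range φ)ᶜ) := by
  obtain ⟨-, hfd⟩ := hUSF
  by_contra hinf
  replace hinf : Set.Infinite ((Set.range φ)ᶜ) := hinf
  set n := Module.finrank ℂ (LinearMap.ker (T : C(K, ℂ) →ₗ[ℂ] C(K, ℂ))) with hn
  let e := hinf.natEmbedding
  let p : Fin (n + 1) → K := fun i => (e (i : ℕ)).1
  have hpmem : ∀ i, p i ∈ (Set.range φ)ᶜ := fun i => (e (i : ℕ)).2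
  have hpinj : Function.Injective p := by
    intro i j h
    exact Fin.val_injective (e.injective (Subtype.ext h))
  have hC : ∀ i : Fin (n + 1), IsClosed (Set.range φ ∪ p '' {j | j ≠ i}) :=
    fun i => ((isCompact_range hφc).isClosed).union (Set.toFinite _).isClosed
  have hdisj : ∀ i, Disjoint (Set.range φ ∪ p '' {j | j ≠ i}) {p i} := by
    intro i
    rw [Set.disjoint_singleton_right]
    rintro (h | ⟨j, hj, hji⟩)
    · exact hpmem i h
    · exact hj (hpinj hji)
  have hury := fun i =>
    exists_continuous_zero_one_of_isClosed (hC i) isClosed_singleton (hdisj i)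
  choose f hf0 hf1 _ using hury
  let g : Fin (n + 1) → C(K, ℂ) := fun i =>
    ContinuousMap.comp ⟨Complex.ofReal, Complex.continuous_ofReal⟩ (f i)
  have hgval : ∀ i k, g i k = (f i k : ℂ) := fun i k => rfl
  have hker : ∀ i, g i ∈ LinearMap.ker (T : C(K, ℂ) →ₗ[ℂ] C(K, ℂ)) := by
    intro i
    rw [LinearMap.mem_ker]
    ext k
    have h0 : f i (φ k) = 0 := hf0 i (Or.inl ⟨k, rfl⟩)
    rw [ContinuousLinearMap.coe_coe, hT]
    simp [hgval, h0]
  let v : Fin (n + 1) → LinearMap.ker (T : C(K, ℂ) →ₗ[ℂ] C(K, ℂ)) := fun i => ⟨g i, hker i⟩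
  have hgd : ∀ i j, g i (p j) = if i = j then 1 else 0 := by
    intro i j
    split_ifs with h
    · subst h
      have h1 : f i (p i) = 1 := hf1 i rfl
      simp [hgval, h1]
    · have h0 : f i (p j) = 0 :=
        hf0 i (Or.inr ⟨j, fun hji => h hji.symm, rfl⟩)
      simp [hgval, h0]
  have hli : LinearIndependent ℂ v := by
    rw [Fintype.linearIndependent_iff]
    intro c hc j
    have h0 : ((∑ i, c i • v i : LinearMap.ker (T : C(K, ℂ) →ₗ[ℂ] C(K, ℂ))) : C(K, ℂ)) (p j) = 0 := by
      rw [hc]; rfl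
    have h1 : ∑ i, c i * g i (p j) = 0 := by
      simpa [v] using h0
    rw [Finset.sum_congr rfl (fun i _ => by rw [hgd i j])] at h1
    simpa using h1
  have hcard := hli.fintype_card_le_finrank
  simp only [Fintype.card_fin] at hcard
  omega
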